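/- Let X_1,...,X_n (n >= 2) be exchangeable random variables with sum_{j=1}^n X_j = 0 and sum_{j=1}^n X_j^2 = n almost surely. Then for each 1 <= i <= n, E[ (E(X_i | X_1,...,X_{i-1}))^2 ] = (i-1) / ((n-i+1)(n-1)). -/

import Mathlib

open MeasureTheory ProbabilityTheory Finset

theorem exchangeable_condexp_sq_moment
    {Ω : Type*} [MeasureSpace Ω] [IsProbabilityMeasure (ℙ : Measure Ω)]
    {n : ℕ} (hn : 2 ≤ n) (X : Fin n → Ω → ℝ)
    (hXm : ∀ i, Measurable (X i))
    (hXsq : ∀ i, MemLp (X i) 2 ℙ)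
    (hexch : ∀ σ : Equiv.Perm (Fin n),
      Measure.map (fun ω => fun j => X (σ j) ω) ℙ = Measure.map (fun ω => fun j => X j ω) ℙ)
    (hsum : ∀ᵐ ω ∂ℙ, ∑ j, X j ω = 0)
    (hsumsq : ∀ᵐ ω ∂ℙ, ∑ j, X j ω ^ 2 = (n : ℝ))
    (i : Fin n) :
    ∫ ω, (ℙ[X i | ⨆ (j : Fin n) (_ : j < i), MeasurableSpace.comap (X j) inferInstance]) ω ^ 2 ∂ℙ
      = (i : ℝ) / (((n : ℝ) - i) * ((n : ℝ) - 1)) := by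
  -- basic numeric facts
  have hIle : (i : ℕ) ≤ n := i.isLt.le
  have hNa : ((n : ℝ) - i) ≠ 0 := by
    have : (i : ℝ) < n := by exact_mod_cast i.isLt
    linarith
  have hN1 : ((n : ℝ) - 1) ≠ 0 := by
    have : (2 : ℝ) ≤ n := by exact_mod_cast hn
    linarith
  -- the joint random vector
  set W : Ω → (Fin n → ℝ) := fun ω j => X j ω with hWdef
  have hWm : Measurable W := measurable_pi_lambda _ fun j => hXm j
  -- master invariance lemma
  have master : ∀ (σ : Equiv.Perm (Fin n)) (g : (Fin n → ℝ) → ℝ), Measurable g →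
      ∫ ω, g (fun l => X (σ l) ω) ∂ℙ = ∫ ω, g (W ω) ∂ℙ := by
    intro σ g hg
    have hWσ : Measurable (fun ω => fun l => X (σ l) ω) :=
      measurable_pi_lambda _ fun j => hXm _
    rw [← integral_map hWσ.aemeasurable (hg.aestronglyMeasurable),
      ← integral_map hWm.aemeasurable (hg.aestronglyMeasurable), hexch σ]
  -- integrability
  have hInt1 : ∀ j, Integrable (X j) ℙ := fun j => (hXsq j).integrable one_le_two
  have hInt2 : ∀ j k, Integrable (fun ω => X j ω * X k ω) ℙ := by
    intro j k
    have h : MemLp (X j • X k) 1 ℙ := (hXsq k).smul (hXsq j)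
    rw [memLp_one_iff_integrable] at h
    exact h
  -- second moments are 1
  have h2 : ∀ j, ∫ ω, X j ω ^ 2 ∂ℙ = 1 := by
    have heq : ∀ j k : Fin n, ∫ ω, X j ω ^ 2 ∂ℙ = ∫ ω, X k ω ^ 2 ∂ℙ := by
      intro j k
      have h := master (Equiv.swap j k) (fun x => x k ^ 2)
        ((measurable_pi_apply k).pow_const 2)
      simpa [Equiv.swap_apply_right] using h
    intro j
    have hs : ∑ k : Fin n, ∫ ω, X k ω ^ 2 ∂ℙ = (n : ℝ) := by
      rw [← integral_finset_sum _ fun k _ => (hXsq k).integrable_sq]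
      rw [integral_congr_ae hsumsq]
      simp
    have hnn : (0 : ℝ) < n := by positivity
    have : (n : ℝ) * ∫ ω, X j ω ^ 2 ∂ℙ = (n : ℝ) := by
      calc (n : ℝ) * ∫ ω, X j ω ^ 2 ∂ℙ = ∑ k : Fin n, ∫ ω, X j ω ^ 2 ∂ℙ := by
            simp [mul_comm]
        _ = ∑ k : Fin n, ∫ ω, X k ω ^ 2 ∂ℙ := Finset.sum_congr rfl fun k _ => heq j k
        _ = (n : ℝ) := hs
    exact mul_left_cancel₀ (ne_of_gt hnn) (by rw [this, mul_one])
  -- cross moments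
  have hcross : ∀ j k : Fin n, j ≠ k → ∫ ω, X j ω * X k ω ∂ℙ = -1 / ((n : ℝ) - 1) := by
    intro j k hjk
    have heq : ∀ k' : Fin n, k' ≠ j → ∫ ω, X j ω * X k' ω ∂ℙ = ∫ ω, X j ω * X k ω ∂ℙ := by
      intro k' hk'
      rcases eq_or_ne k' k with rfl | hkk
      · rfl
      have h := master (Equiv.swap k' k) (fun x => x j * x k)
        ((measurable_pi_apply j).mul (measurable_pi_apply k))
      simpa [Equiv.swap_apply_right, Equiv.swap_apply_of_ne_of_ne hk'.symm hjk] using h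
    have hzero : ∑ k' : Fin n, ∫ ω, X j ω * X k' ω ∂ℙ = 0 := by
      rw [← integral_finset_sum _ fun k' _ => hInt2 j k']
      have hae : ∀ᵐ ω ∂ℙ, ∑ k' : Fin n, X j ω * X k' ω = 0 :=
        hsum.mono fun ω h => by rw [← Finset.mul_sum, h, mul_zero]
      rw [integral_congr_ae hae, integral_zero]
    have hXjj : ∫ ω, X j ω * X j ω ∂ℙ = 1 := by
      have h := h2 j
      simpa [pow_two] using h
    have hsplit : (0 : ℝ) = ((n : ℝ) - 1) * (∫ ω, X j ω * X k ω ∂ℙ) + 1 := by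
      rw [← hzero, ← Finset.sum_erase_add _ _ (Finset.mem_univ j)]
      rw [Finset.sum_congr rfl (fun k' hk' => heq k' (Finset.ne_of_mem_erase hk')), hXjj]
      rw [Finset.sum_const, Finset.card_erase_of_mem (Finset.mem_univ j), Finset.card_univ,
        Fintype.card_fin, nsmul_eq_mul]
      push_cast [Nat.cast_sub (le_trans one_le_two hn)]
      ring
    field_simp
    linarith [hsplit]

  -- setup of the conditioning σ-algebra
  set I : ℕ := (i : ℕ) with hIdef
  set π : (Fin n → ℝ) → (Fin I → ℝ) := fun x t => x (Fin.castLE hIle t) with hπdef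
  set U : Ω → (Fin I → ℝ) := fun ω => π (W ω) with hUdef
  have hπm : Measurable π := measurable_pi_lambda _ fun t => measurable_pi_apply _
  have hUm : Measurable U := hπm.comp hWm
  have hcast_lt : ∀ t : Fin I, Fin.castLE hIle t < i := fun t => by
    exact Fin.lt_def.mpr t.isLt
  have hmeq : (⨆ (j : Fin n) (_ : j < i), MeasurableSpace.comap (X j) inferInstance)
      = MeasurableSpace.comap U MeasurableSpace.pi := by
    have hpi : (MeasurableSpace.pi : MeasurableSpace (Fin I → ℝ))
        = ⨆ t : Fin I, MeasurableSpace.comap (fun x => x t) inferInstance := rfl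
    rw [hpi, MeasurableSpace.comap_iSup]
    apply le_antisymm
    · refine iSup₂_le fun j hj => ?_
      have hXj : X j = (fun x : Fin I → ℝ => x ⟨j.1, hj⟩) ∘ U := by
        funext ω
        rfl
      calc MeasurableSpace.comap (X j) inferInstance
          = (MeasurableSpace.comap (fun x : Fin I → ℝ => x ⟨j.1, hj⟩)
              inferInstance).comap U := by
            rw [MeasurableSpace.comap_comp, ← hXj]
        _ ≤ _ := le_iSup
            (fun t : Fin I =>
              (MeasurableSpace.comap (fun x : Fin I → ℝ => x t) inferInstance).comap U)
            (⟨j.1, hj⟩ : Fin I)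
    · refine iSup_le fun t => ?_
      rw [MeasurableSpace.comap_comp]
      exact le_iSup₂ (f := fun (j : Fin n) (_ : j < i) =>
        MeasurableSpace.comap (X j) inferInstance) (Fin.castLE hIle t) (hcast_lt t)
  have hm : MeasurableSpace.comap U MeasurableSpace.pi
      ≤ (inferInstance : MeasurableSpace Ω) :=
    measurable_iff_comap_le.mp hUm
  -- the candidate conditional expectation
  set S : Ω → ℝ := fun ω => ∑ t : Fin I, X (Fin.castLE hIle t) ω with hSdef
  set G : Ω → ℝ := fun ω => -(((n : ℝ) - I)⁻¹ * S ω) with hGdef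
  have hSInt : Integrable S ℙ := integrable_finset_sum _ fun t _ => hInt1 _
  have hGInt : Integrable G ℙ := (hSInt.const_mul _).neg
  -- symmetry of set integrals over m'-sets
  have hset : ∀ (A : Set (Fin I → ℝ)), MeasurableSet A → ∀ j k : Fin n, ¬ j < i → ¬ k < i →
      ∫ ω in U ⁻¹' A, X j ω ∂ℙ = ∫ ω in U ⁻¹' A, X k ω ∂ℙ := by
    intro A hA j k hj hk
    rcases eq_or_ne j k with rfl | hjk
    · rfl
    have hAm : MeasurableSet (π ⁻¹' A) := hπm hA
    have hmeasg : Measurable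
        (fun x : Fin n → ℝ => Set.indicator (π ⁻¹' A) (fun _ => (1 : ℝ)) x * x k) :=
      (measurable_const.indicator hAm).mul (measurable_pi_apply k)
    have h := master (Equiv.swap j k) _ hmeasg
    have hfix : ∀ ω, ((fun l => X (Equiv.swap j k l) ω) ∈ π ⁻¹' A) ↔ (W ω ∈ π ⁻¹' A) := by
      intro ω
      have hππ : π (fun l => X (Equiv.swap j k l) ω) = π (W ω) := by
        funext t
        have h1 : Fin.castLE hIle t ≠ j := fun hc => hj (hc ▸ hcast_lt t)
        have h2 : Fin.castLE hIle t ≠ k := fun hc => hk (hc ▸ hcast_lt t)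
        show X (Equiv.swap j k (Fin.castLE hIle t)) ω = _
        rw [Equiv.swap_apply_of_ne_of_ne h1 h2]
      constructor
      · intro hmem
        exact Set.mem_preimage.mpr (hππ ▸ Set.mem_preimage.mp hmem)
      · intro hmem
        exact Set.mem_preimage.mpr (hππ ▸ Set.mem_preimage.mp hmem)
    have claim1 : ∀ j' : Fin n, ∫ ω in U ⁻¹' A, X j' ω ∂ℙ
        = ∫ ω, Set.indicator (π ⁻¹' A) (fun _ => (1 : ℝ)) (W ω) * X j' ω ∂ℙ := by
      intro j'
      rw [← integral_indicator (hUm hA)]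
      refine integral_congr_ae (Filter.Eventually.of_forall fun ω => ?_)
      show (U ⁻¹' A).indicator (X j') ω
          = Set.indicator (π ⁻¹' A) (fun _ => (1 : ℝ)) (W ω) * X j' ω
      by_cases hω : W ω ∈ π ⁻¹' A
      · rw [Set.indicator_of_mem hω, Set.indicator_of_mem (show ω ∈ U ⁻¹' A from hω), one_mul]
      · rw [Set.indicator_of_notMem hω,
          Set.indicator_of_notMem (show ω ∉ U ⁻¹' A from hω), zero_mul]
    have e1 : ∫ ω, (fun x : Fin n → ℝ => Set.indicator (π ⁻¹' A) (fun _ => (1 : ℝ)) x * x k)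
        (fun l => X (Equiv.swap j k l) ω) ∂ℙ
        = ∫ ω, Set.indicator (π ⁻¹' A) (fun _ => (1 : ℝ)) (W ω) * X j ω ∂ℙ := by
      refine integral_congr_ae (Filter.Eventually.of_forall fun ω => ?_)
      show Set.indicator (π ⁻¹' A) (fun _ => (1 : ℝ)) (fun l => X (Equiv.swap j k l) ω)
          * X (Equiv.swap j k k) ω = _
      rw [Equiv.swap_apply_right]
      congr 1
      by_cases hω : W ω ∈ π ⁻¹' A
      · rw [Set.indicator_of_mem ((hfix ω).mpr hω), Set.indicator_of_mem hω]
      · rw [Set.indicator_of_notMem (fun hc => hω ((hfix ω).mp hc)),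
          Set.indicator_of_notMem hω]
    have e2 : ∫ ω, (fun x : Fin n → ℝ => Set.indicator (π ⁻¹' A) (fun _ => (1 : ℝ)) x * x k)
        (W ω) ∂ℙ = ∫ ω, Set.indicator (π ⁻¹' A) (fun _ => (1 : ℝ)) (W ω) * X k ω ∂ℙ := rfl
    rw [claim1 j, claim1 k, ← e1, ← e2, h]
  -- reindexing sums over the initial segment
  have hbij : ∀ {M : Type} [AddCommMonoid M] (F : Fin n → M),
      ∑ t : Fin I, F (Fin.castLE hIle t)
        = ∑ j ∈ Finset.univ.filter (fun j : Fin n => j < i), F j := by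
    intro M _ F
    refine Finset.sum_bij' (fun t _ => Fin.castLE hIle t)
      (fun j hj => ⟨j.1, (Finset.mem_filter.mp hj).2⟩) ?_ ?_ ?_ ?_ ?_
    · intro t _
      exact Finset.mem_filter.mpr ⟨Finset.mem_univ _, hcast_lt t⟩
    · intro j hj
      exact Finset.mem_univ _
    · intro t _
      rfl
    · intro j hj
      rfl
    · intro t _
      rfl
  have hcard : (Finset.univ.filter (fun j : Fin n => j < i)).card = I := by
    have h := hbij (M := ℕ) (fun _ => 1)
    rw [Finset.sum_const, Finset.sum_const, smul_eq_mul, smul_eq_mul, mul_one, mul_one,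
      Finset.card_univ, Fintype.card_fin] at h
    exact h.symm
  -- the set-integral identity characterizing the conditional expectation
  have hkey : ∀ s : Set Ω, MeasurableSet[MeasurableSpace.comap U MeasurableSpace.pi] s →
      ∫ ω in s, G ω ∂ℙ = ∫ ω in s, X i ω ∂ℙ := by
    intro s hs
    obtain ⟨A, hA, rfl⟩ := hs
    have hsm : MeasurableSet (U ⁻¹' A) := hUm hA
    have hzero : ∑ j : Fin n, ∫ ω in U ⁻¹' A, X j ω ∂ℙ = 0 := by
      rw [← integral_finset_sum _ fun j _ => (hInt1 j).integrableOn]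
      have h0 : ∫ ω in U ⁻¹' A, (∑ j : Fin n, X j ω) ∂ℙ = ∫ ω in U ⁻¹' A, (0 : ℝ) ∂ℙ :=
        setIntegral_congr_ae hsm (hsum.mono fun ω h _ => h)
      rw [h0, integral_zero]
    have hconst : ∑ j ∈ Finset.univ.filter (fun j : Fin n => ¬ j < i),
        ∫ ω in U ⁻¹' A, X j ω ∂ℙ = ((n : ℝ) - I) * ∫ ω in U ⁻¹' A, X i ω ∂ℙ := by
      rw [Finset.sum_congr rfl
        (fun j hj => hset A hA j i (Finset.mem_filter.mp hj).2 (lt_irrefl i))]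
      rw [Finset.sum_const, nsmul_eq_mul]
      congr 1
      have h2c := Finset.card_filter_add_card_filter_not
        (s := (Finset.univ : Finset (Fin n))) (p := fun j : Fin n => j < i)
      rw [hcard, Finset.card_univ, Fintype.card_fin] at h2c
      have hcc : (Finset.univ.filter (fun j : Fin n => ¬ j < i)).card = n - I := by omega
      rw [hcc]
      push_cast [Nat.cast_sub hIle]
      ring
    have hsplit := Finset.sum_filter_add_sum_filter_not Finset.univ (fun j : Fin n => j < i)
      (fun j => ∫ ω in U ⁻¹' A, X j ω ∂ℙ)
    have hSint : ∫ ω in U ⁻¹' A, S ω ∂ℙ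
        = ∑ t : Fin I, ∫ ω in U ⁻¹' A, X (Fin.castLE hIle t) ω ∂ℙ :=
      integral_finset_sum _ fun t _ => (hInt1 _).integrableOn
    have hSval : ∫ ω in U ⁻¹' A, S ω ∂ℙ
        = -(((n : ℝ) - I) * ∫ ω in U ⁻¹' A, X i ω ∂ℙ) := by
      rw [hSint, hbij (fun j => ∫ ω in U ⁻¹' A, X j ω ∂ℙ)]
      rw [hzero, hconst] at hsplit
      linarith
    have hGval : ∫ ω in U ⁻¹' A, G ω ∂ℙ
        = -(((n : ℝ) - I)⁻¹ * ∫ ω in U ⁻¹' A, S ω ∂ℙ) := by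
      rw [hGdef]
      rw [integral_neg, integral_const_mul]
    rw [hGval, hSval]
    field_simp
  -- G is measurable w.r.t. the comap σ-algebra
  have hUm' : Measurable[MeasurableSpace.comap U MeasurableSpace.pi] U :=
    measurable_iff_comap_le.mpr le_rfl
  have hGm : Measurable[MeasurableSpace.comap U MeasurableSpace.pi] G := by
    apply Measurable.neg
    apply Measurable.const_mul
    exact Finset.measurable_sum _ fun t _ => ((measurable_pi_apply t).comp hUm')
  -- identify the conditional expectation
  have hcond : G =ᵐ[ℙ] ℙ[X i | MeasurableSpace.comap U MeasurableSpace.pi] :=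
    ae_eq_condExp_of_forall_setIntegral_eq hm (hInt1 i)
      (fun s _ _ => hGInt.integrableOn) (fun s hs _ => hkey s hs)
      (StronglyMeasurable.aestronglyMeasurable (Measurable.stronglyMeasurable hGm))
  rw [hmeq]
  have hre : ∫ ω, (ℙ[X i | MeasurableSpace.comap U MeasurableSpace.pi]) ω ^ 2 ∂ℙ
      = ∫ ω, G ω ^ 2 ∂ℙ :=
    integral_congr_ae (by filter_upwards [hcond] with ω h; rw [← h])
  rw [hre]
  -- compute the second moment of G
  have hG2 : ∀ ω, G ω ^ 2 = (((n : ℝ) - I)⁻¹) ^ 2 * (S ω * S ω) := fun ω => by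
    rw [hGdef]
    ring
  rw [integral_congr_ae (Filter.Eventually.of_forall hG2), integral_const_mul]
  have hSS : ∫ ω, S ω * S ω ∂ℙ = ∑ t : Fin I, ∑ u : Fin I,
      ∫ ω, X (Fin.castLE hIle t) ω * X (Fin.castLE hIle u) ω ∂ℙ := by
    have hpt : ∀ ω, S ω * S ω = ∑ t : Fin I, ∑ u : Fin I,
        X (Fin.castLE hIle t) ω * X (Fin.castLE hIle u) ω := fun ω => by
      rw [hSdef, Finset.sum_mul_sum]
    rw [integral_congr_ae (Filter.Eventually.of_forall hpt)]
    rw [integral_finset_sum _ fun t _ => integrable_finset_sum _ fun u _ => hInt2 _ _]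
    exact Finset.sum_congr rfl fun t _ => integral_finset_sum _ fun u _ => hInt2 _ _
  rw [hSS]
  have hterm : ∀ t u : Fin I, ∫ ω, X (Fin.castLE hIle t) ω * X (Fin.castLE hIle u) ω ∂ℙ
      = if t = u then (1 : ℝ) else -1 / ((n : ℝ) - 1) := by
    intro t u
    by_cases h : t = u
    · subst h
      rw [if_pos rfl]
      have h' := h2 (Fin.castLE hIle t)
      simpa [pow_two] using h'
    · rw [if_neg h]
      exact hcross _ _ fun hc => h (Fin.castLE_injective hIle hc)
  rw [Finset.sum_congr rfl fun t _ => Finset.sum_congr rfl fun u _ => hterm t u]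
  have hinner : ∀ t : Fin I, ∑ u : Fin I, (if t = u then (1 : ℝ) else -1 / ((n : ℝ) - 1))
      = (I : ℝ) * (-1 / ((n : ℝ) - 1)) + (1 - (-1 / ((n : ℝ) - 1))) := by
    intro t
    have hsplit : ∀ u : Fin I, (if t = u then (1 : ℝ) else -1 / ((n : ℝ) - 1))
        = (-1 / ((n : ℝ) - 1)) + (if t = u then 1 - (-1 / ((n : ℝ) - 1)) else 0) := by
      intro u
      by_cases h : t = u
      · rw [if_pos h, if_pos h]
        ring
      · rw [if_neg h, if_neg h]
        ring
    rw [Finset.sum_congr rfl fun u _ => hsplit u, Finset.sum_add_distrib,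
      Finset.sum_const, Finset.card_univ, Fintype.card_fin, nsmul_eq_mul,
      Finset.sum_ite_eq Finset.univ t, if_pos (Finset.mem_univ t)]
  rw [Finset.sum_congr rfl fun t _ => hinner t, Finset.sum_const, Finset.card_univ,
    Fintype.card_fin, nsmul_eq_mul]
  field_simp
  ring
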